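/- Let A be a pseudocomplemented distributive lattice generated by elements a₁, …, aₙ. Then b ∈ A is an atom of A if and only if b ≠ 0 and there exists T ⊆ {1,…,n} such that b = a_T, where a_T = ⋀_{i∈T} aᵢ ∧ ⋀_{i∉T} ¬aᵢ. -/
import Mathlib


/-- Given elements `a 0, …, a (n-1)` of a pseudocomplemented distributive lattice with
pseudocomplement operation `neg`, and `T ⊆ {0,…,n-1}`,
`aT neg a T = ⋀_{i ∈ T} a i ⊓ ⋀_{i ∉ T} ¬(a i)` (empty meets being `⊤`). -/
def aT {A : Type*} [Lattice A] [OrderTop A] (neg : A → A) {n : ℕ}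
    (a : Fin n → A) (T : Finset (Fin n)) : A :=
  T.inf a ⊓ Tᶜ.inf fun i => neg (a i)

/-- Let `A` be a pseudocomplemented distributive lattice (a bounded distributive lattice with
an operation `neg` satisfying `x ≤ ¬y ↔ x ⊓ y = ⊥`) generated by `a 0, …, a (n-1)` (no proper
subset of `A` contains the generators, `⊥`, `⊤` and is closed under `⊓`, `⊔`, `¬`). Then
`b ∈ A` is an atom iff `b ≠ ⊥` and `b = a_T` for some `T ⊆ {0,…,n-1}`. -/
theorem atom_iff_aT_of_generated
    {A : Type*} [DistribLattice A] [BoundedOrder A]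
    (neg : A → A) (hneg : ∀ x y : A, x ≤ neg y ↔ x ⊓ y = ⊥)
    {n : ℕ} (a : Fin n → A)
    (hgen : ∀ S : Set A, (∀ i, a i ∈ S) → (⊥ : A) ∈ S → (⊤ : A) ∈ S →
      (∀ x ∈ S, ∀ y ∈ S, x ⊓ y ∈ S) → (∀ x ∈ S, ∀ y ∈ S, x ⊔ y ∈ S) →
      (∀ x ∈ S, neg x ∈ S) → S = Set.univ)
    (b : A) :
    IsAtom b ↔ b ≠ ⊥ ∧ ∃ T : Finset (Fin n), b = aT neg a T := by
  classical
  -- Key lemma: every element either meets `aT neg a T` trivially or lies above it.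
  have key : ∀ T : Finset (Fin n), ∀ x : A,
      x ⊓ aT neg a T = ⊥ ∨ aT neg a T ≤ x := by
    intro T
    set c := aT neg a T with hc
    have hS : {x : A | x ⊓ c = ⊥ ∨ c ≤ x} = Set.univ := by
      apply hgen
      · intro i
        by_cases hi : i ∈ T
        · exact Or.inr (le_trans inf_le_left (Finset.inf_le hi))
        · left
          have h1 : c ≤ neg (a i) :=
            le_trans inf_le_right (Finset.inf_le (Finset.mem_compl.mpr hi))
          have h2 : c ⊓ a i = ⊥ := (hneg c (a i)).mp h1
          rw [inf_comm] at h2; exact h2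
      · exact Or.inl (bot_inf_eq c)
      · exact Or.inr le_top
      · rintro x (hx | hx) y (hy | hy)
        · exact Or.inl (le_bot_iff.mp (le_trans (inf_le_inf_right c inf_le_left) hx.le))
        · exact Or.inl (le_bot_iff.mp (le_trans (inf_le_inf_right c inf_le_left) hx.le))
        · exact Or.inl (le_bot_iff.mp (le_trans (inf_le_inf_right c inf_le_right) hy.le))
        · exact Or.inr (le_inf hx hy)
      · rintro x (hx | hx) y (hy | hy)
        · exact Or.inl (by rw [inf_sup_right, hx, hy, sup_idem])
        · exact Or.inr (le_trans hy le_sup_right)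
        · exact Or.inr (le_trans hx le_sup_left)
        · exact Or.inr (le_trans hx le_sup_left)
      · rintro x (hx | hx)
        · refine Or.inr ((hneg c x).mpr ?_)
          rw [inf_comm]; exact hx
        · left
          have hnx : neg x ⊓ x = ⊥ := (hneg (neg x) x).mp le_rfl
          exact le_bot_iff.mp (le_trans (inf_le_inf_left (neg x) hx) hnx.le)
    intro x
    exact (Set.eq_univ_iff_forall.mp hS) x
  constructor
  · intro hb
    refine ⟨hb.1, Finset.univ.filter (fun i => b ≤ a i), ?_⟩
    set T : Finset (Fin n) := Finset.univ.filter (fun i => b ≤ a i) with hT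
    have hle : b ≤ aT neg a T := by
      refine le_inf (Finset.le_inf fun i hi => (Finset.mem_filter.mp hi).2)
        (Finset.le_inf fun i hi => ?_)
      have hni : ¬ b ≤ a i := by
        have := Finset.mem_compl.mp hi
        simpa [hT] using this
      have hlt : b ⊓ a i < b := by
        rcases lt_or_eq_of_le (inf_le_left : b ⊓ a i ≤ b) with h | h
        · exact h
        · exact absurd (inf_eq_left.mp h) hni
      exact (hneg b (a i)).mpr (hb.2 _ hlt)
    rcases key T b with h | h
    · exact absurd (inf_eq_left.mpr hle ▸ h) hb.1
    · exact le_antisymm hle h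
  · rintro ⟨hb, T, rfl⟩
    refine ⟨hb, fun c hc => ?_⟩
    rcases key T c with h | h
    · rw [inf_eq_left.mpr hc.le] at h; exact h
    · exact absurd h hc.not_ge
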